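/- The Taylor expansion map T : Ẑ[v]₂ → ℤ[[v-1]] is injective, where Ẑ[v]₂ is the inverse limit of ℤ[v^{±1}]/((-v²;-v)_{2n}) over n, and T sends f to its formal power series expansion at v = 1. -/

import Mathlib

open LaurentPolynomial Finset

/-- `(-v²;-v)_{2n} = ∏_{i=2}^{2n+1} (1 + (-v)^i)` as a Laurent polynomial in `v`. -/
noncomputable def P2 (n : ℕ) : LaurentPolynomial ℤ :=
  ∏ i ∈ Finset.range (2 * n), (1 + (-T 1) ^ (i + 2))

/-- `1 + X` is a unit of `ℤ[[X]]`. -/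
theorem oneAddX_isUnit : IsUnit (1 + PowerSeries.X : PowerSeries ℤ) := by
  rw [PowerSeries.isUnit_iff_constantCoeff]
  simp

/-- The Taylor expansion `ℤ[v^{±1}] → ℤ[[X]]` at `v = 1`, i.e. the (ring) map
sending `v ↦ 1 + X`; writing `X = v - 1` it is the Taylor series at `v = 1`. -/
noncomputable def taylorLP (f : LaurentPolynomial ℤ) : PowerSeries ℤ :=
  Finsupp.sum f.coeff fun n c => c • ((oneAddX_isUnit.unit ^ n : (PowerSeries ℤ)ˣ) : PowerSeries ℤ)

namespace HabiroAux

open Polynomial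

noncomputable def taylorHom : LaurentPolynomial ℤ →ₐ[ℤ] PowerSeries ℤ :=
  AddMonoidAlgebra.lift ℤ (PowerSeries ℤ) ℤ
    ((Units.coeHom (PowerSeries ℤ)).comp (zpowersHom (PowerSeries ℤ)ˣ oneAddX_isUnit.unit))
lemma taylorHom_apply (f : LaurentPolynomial ℤ) : taylorHom f = taylorLP f := by
  rw [taylorHom, AddMonoidAlgebra.lift_apply, taylorLP]
  rfl

lemma taylorHom_T (n : ℤ) :
    taylorHom (T n) =
      ((oneAddX_isUnit.unit ^ n : (PowerSeries ℤ)ˣ) : PowerSeries ℤ) := by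
  have hT : (T n : LaurentPolynomial ℤ) = AddMonoidAlgebra.single n 1 := rfl
  rw [taylorHom, hT, AddMonoidAlgebra.lift_single]
  simp
  exact one_smul ℤ _

lemma taylorHom_toLaurent (F : ℤ[X]) :
    taylorHom (Polynomial.toLaurent F) = ((F.comp (1 + X) : ℤ[X]) : PowerSeries ℤ) := by
  have key : taylorHom.comp toLaurentAlg
      = (Polynomial.coeToPowerSeries.algHom (R := ℤ) ℤ).comp (Polynomial.aeval (1 + X : ℤ[X])) := by
    apply Polynomial.algHom_ext
    simp only [AlgHom.coe_comp, Function.comp_apply, toLaurentAlg_apply, Polynomial.toLaurent_X,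
      aeval_X, Polynomial.coeToPowerSeries.algHom_apply]
    rw [taylorHom_T, zpow_one, IsUnit.unit_spec]
    push_cast
    simp [Polynomial.coe_add, Polynomial.coe_one, Polynomial.coe_X]
  have := congrArg (fun φ => φ F) key
  simp only [AlgHom.coe_comp, Function.comp_apply, toLaurentAlg_apply,
    Polynomial.coeToPowerSeries.algHom_apply, ← comp_eq_aeval] at this
  rw [this]
  simp

lemma self_eq_mul_T {f : LaurentPolynomial ℤ} {F : ℤ[X]} {N : ℕ}
    (hF : Polynomial.toLaurent F = f * T N) : f = Polynomial.toLaurent F * T (-(N:ℤ)) := by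
  rw [hF, mul_assoc, ← T_add]
  simp

lemma pow_sub_one_dvd_of_X_pow_dvd_taylor {f : LaurentPolynomial ℤ} {m : ℕ}
    (h : (PowerSeries.X : PowerSeries ℤ) ^ m ∣ taylorLP f) :
    Polynomial.toLaurent (((X : ℤ[X]) - 1) ^ m) ∣ f := by
  obtain ⟨N, F, hF⟩ := exists_T_pow f
  have h1 : (PowerSeries.X : PowerSeries ℤ) ^ m ∣ taylorHom (Polynomial.toLaurent F) := by
    rw [hF, map_mul, taylorHom_apply]
    exact h.mul_right _
  rw [taylorHom_toLaurent] at h1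
  have h2 : (X : ℤ[X]) ^ m ∣ F.comp (1 + X) := by
    rw [Polynomial.X_pow_dvd_iff]
    intro d hd
    rw [PowerSeries.X_pow_dvd_iff] at h1
    have := h1 d hd
    rwa [Polynomial.coeff_coe] at this
  have h3 : ((X : ℤ[X]) - 1) ^ m ∣ (F.comp (1 + X)).comp (X - 1) := by
    obtain ⟨k, hk⟩ := h2
    exact ⟨k.comp (X - 1), by rw [hk, mul_comp, pow_comp, X_comp]⟩
  have h4 : (F.comp (1 + X)).comp (X - 1) = F := by
    rw [comp_assoc]
    simp
  rw [h4] at h3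
  have h5 : Polynomial.toLaurent (((X : ℤ[X]) - 1) ^ m) ∣ Polynomial.toLaurent F :=
    map_dvd _ h3
  rw [self_eq_mul_T hF]
  exact h5.mul_right _

/-- polynomials with coefficient 0 equal to `±1` are coprime to `X`. -/
lemma isCoprime_X_of {a : ℤ[X]} (h : a.coeff 0 = 1 ∨ a.coeff 0 = -1) :
    IsCoprime (X : ℤ[X]) a := by
  set c := a.coeff 0 with hc
  have hX : (X : ℤ[X]) ∣ a - Polynomial.C c := by
    rw [Polynomial.X_dvd_iff]; simp [hc]
  obtain ⟨t, ht⟩ := hX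
  have hsq : c * c = 1 := by rcases h with h | h <;> simp [h]
  refine ⟨-(Polynomial.C c * t), Polynomial.C c, ?_⟩
  have ha : a = X * t + Polynomial.C c := by linear_combination ht
  rw [ha]
  have : -(Polynomial.C c * t) * X + Polynomial.C c * (X * t + Polynomial.C c)
      = Polynomial.C c * Polynomial.C c := by ring
  rw [this, ← Polynomial.C_mul, hsq, Polynomial.C_1]

lemma dvd_of_toLaurent_dvd {a G : ℤ[X]} (ha : IsCoprime (X : ℤ[X]) a)
    (h : Polynomial.toLaurent a ∣ Polynomial.toLaurent G) : a ∣ G := by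
  obtain ⟨c, hc⟩ := h
  obtain ⟨k, c', hc'⟩ := exists_T_pow c
  have : Polynomial.toLaurent (G * X ^ k) = Polynomial.toLaurent (a * c') := by
    rw [map_mul, map_mul, Polynomial.toLaurent_X_pow, hc, hc', mul_assoc]
  have h2 : G * X ^ k = a * c' := Polynomial.toLaurent_injective this
  have h3 : a ∣ G * X ^ k := h2 ▸ dvd_mul_right a c'
  exact (ha.symm.pow_right).dvd_of_dvd_mul_right h3

/-- Bridge: divisibility in the Laurent ring descends to polynomial representatives. -/
lemma dvd_rep_of_laurent_dvd {a : ℤ[X]} (ha : IsCoprime (X : ℤ[X]) a)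
    {f : LaurentPolynomial ℤ} {F : ℤ[X]} {N : ℕ}
    (hF : Polynomial.toLaurent F = f * T N)
    (h : Polynomial.toLaurent a ∣ f) : a ∣ F :=
  dvd_of_toLaurent_dvd ha (hF ▸ h.mul_right _)

lemma laurent_dvd_of_dvd_rep {a : ℤ[X]}
    {f : LaurentPolynomial ℤ} {F : ℤ[X]} {N : ℕ}
    (hF : Polynomial.toLaurent F = f * T N)
    (h : a ∣ F) : Polynomial.toLaurent a ∣ f := by
  rw [self_eq_mul_T hF]
  exact (map_dvd Polynomial.toLaurent h).mul_right _

lemma int_eq_zero_of_forall_pow_dvd {p : ℕ} (hp : 2 ≤ p) {z : ℤ}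
    (h : ∀ s : ℕ, ((p : ℤ)) ^ s ∣ z) : z = 0 := by
  by_contra hz
  set s := z.natAbs with hs
  have h1 : (p : ℤ) ^ s ≤ (s : ℤ) := by
    have := Int.le_of_dvd (by exact_mod_cast Int.natAbs_pos.mpr hz)
      (Int.dvd_natAbs.mpr (h s))
    exact_mod_cast this
  have h2 : (2 : ℤ) ^ s ≤ (p : ℤ) ^ s := by
    apply pow_le_pow_left₀ (by norm_num)
    exact_mod_cast hp
  have h3 : (s : ℤ) < 2 ^ s := by exact_mod_cast Nat.lt_two_pow_self
  exact lt_irrefl ((s : ℤ)) (lt_of_lt_of_le (h3.trans_le h2) h1)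

/-- `Lemma B`: separation by a monic polynomial coprime to `X`, out of `p`-adic
approximate divisibility. -/
lemma laurent_dvd_of_forall_padic {Ψ : ℤ[X]} (hm : Ψ.Monic) (hcop : IsCoprime (X : ℤ[X]) Ψ)
    {p : ℕ} (hp : p.Prime) (f : LaurentPolynomial ℤ)
    (h : ∀ s : ℕ, ∃ b : LaurentPolynomial ℤ,
      Polynomial.toLaurent Ψ ∣ f - (p : LaurentPolynomial ℤ) ^ s * b) :
    Polynomial.toLaurent Ψ ∣ f := by
  obtain ⟨N, F, hF⟩ := exists_T_pow f
  obtain ⟨α, β, hαβ⟩ := hcop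
  set r := F %ₘ Ψ with hr
  have hFr : Ψ ∣ F - r := ⟨F /ₘ Ψ, by linear_combination (-1 : ℤ[X]) * modByMonic_add_div F Ψ⟩
  have key : ∀ s : ℕ, ∃ B : ℤ[X], Ψ ∣ r - (p : ℤ[X]) ^ s * B := by
    intro s
    obtain ⟨b, hb⟩ := h s
    obtain ⟨kb, Bb, hBb⟩ := exists_T_pow b
    -- Ψ divides the polynomial F * X^kb - p^s * (Bb * X^N)
    have h1 : Polynomial.toLaurent Ψ ∣
        Polynomial.toLaurent (F * X ^ kb - (p : ℤ[X]) ^ s * (Bb * X ^ N)) := by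
      have e1 : Polynomial.toLaurent (F * X ^ kb - (p : ℤ[X]) ^ s * (Bb * X ^ N))
          = (f - (p : LaurentPolynomial ℤ) ^ s * b) * (T (N : ℤ) * T (kb : ℤ)) := by
        rw [map_sub, map_mul, map_mul, map_mul, Polynomial.toLaurent_X_pow,
          Polynomial.toLaurent_X_pow, hF, hBb, map_pow, map_natCast]
        push_cast
        ring
      rw [e1]
      exact hb.mul_right _
    have h2 : Ψ ∣ F * X ^ kb - (p : ℤ[X]) ^ s * (Bb * X ^ N) :=
      dvd_of_toLaurent_dvd ⟨α, β, hαβ⟩ h1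
    refine ⟨α ^ kb * (Bb * X ^ N), ?_⟩
    have h3 : Ψ ∣ (X * α) ^ kb - 1 := by
      have : (X * α - 1 : ℤ[X]) ∣ (X * α) ^ kb - 1 ^ kb := sub_dvd_pow_sub_pow _ _ _
      rw [one_pow] at this
      refine dvd_trans ⟨-β, by linear_combination hαβ⟩ this
    have h4 : Ψ ∣ α ^ kb * (F * X ^ kb - (p : ℤ[X]) ^ s * (Bb * X ^ N)) := h2.mul_left _
    -- r - p^s B = α^kb * (F X^kb - p^s Bb X^N) - F ((Xα)^kb - 1) - (F - r)
    have e2 : r - (p : ℤ[X]) ^ s * (α ^ kb * (Bb * X ^ N))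
        = α ^ kb * (F * X ^ kb - (p : ℤ[X]) ^ s * (Bb * X ^ N))
          - F * ((X * α) ^ kb - 1) - (F - r) := by ring
    rw [e2]
    exact (h4.sub (h3.mul_left F)).sub hFr
  -- coefficientwise: every coefficient of r is divisible by every power of p
  have hrz : r = 0 := by
    have hcoef : ∀ t s : ℕ, (p : ℤ) ^ s ∣ r.coeff t := by
      intro t s
      rcases Nat.eq_zero_or_pos s with hs0 | hs0
      · simp [hs0]
      obtain ⟨B, e, he⟩ := key s
      haveI : Fact (1 < p ^ s) := ⟨Nat.one_lt_pow hs0.ne' hp.one_lt⟩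
      set φ := Int.castRingHom (ZMod (p ^ s)) with hφ
      have hmap : r.map φ = (Ψ.map φ) * (e.map φ) := by
        have := congrArg (Polynomial.map φ) he
        rw [Polynomial.map_sub, Polynomial.map_mul, Polynomial.map_mul, Polynomial.map_pow] at this
        have hp0 : ((p : ℤ[X]).map φ) ^ s = 0 := by
          rw [Polynomial.map_natCast]
          rw [← Nat.cast_pow]
          rw [show ((p ^ s : ℕ) : (ZMod (p ^ s))[X]) = 0 by
            rw [← Polynomial.C_eq_natCast]
            simp [ZMod.natCast_self]]
        rw [hp0, zero_mul, sub_zero] at this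
        exact this
      have hdeg : (r.map φ).degree < (Ψ.map φ).degree := by
        rw [hm.degree_map]
        exact lt_of_le_of_lt (degree_map_le) (degree_modByMonic_lt F hm)
      have hez : e.map φ = 0 := by
        by_contra hez
        have : (Ψ.map φ * e.map φ).degree = (e.map φ).degree + (Ψ.map φ).degree := by
          rw [mul_comm]
          exact (hm.map φ).degree_mul
        rw [hmap, this] at hdeg
        have h0 : (0 : WithBot ℕ) ≤ (e.map φ).degree := zero_le_degree_iff.mpr hez
        have : (Ψ.map φ).degree ≤ (e.map φ).degree + (Ψ.map φ).degree := by
          nth_rewrite 1 [← zero_add (Ψ.map φ).degree]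
          exact add_le_add_left h0 _
        exact absurd hdeg (not_lt.mpr this)
      rw [hez, mul_zero] at hmap
      have : φ (r.coeff t) = 0 := by
        have := congrArg (fun q => Polynomial.coeff q t) hmap
        simpa [Polynomial.coeff_map] using this
      have : ((r.coeff t : ZMod (p ^ s))) = 0 := this
      rw [ZMod.intCast_zmod_eq_zero_iff_dvd] at this
      exact_mod_cast this
    ext t
    simp only [Polynomial.coeff_zero]
    exact int_eq_zero_of_forall_pow_dvd hp.two_le (hcoef t)
  have : Ψ ∣ F := by rw [hrz, sub_zero] at hFr; exact hFr
  exact laurent_dvd_of_dvd_rep hF this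

/-- mod `p`, the cyclotomic polynomial of index `d₀ * p ^ e` is a positive power of the
cyclotomic polynomial of index `d₀`. -/
lemma cyclotomic_mul_prime_pow_zmod {p d₀ : ℕ} (hp : p.Prime) (hd₀ : ¬ p ∣ d₀)
    (hd₀pos : 0 < d₀) {e : ℕ} (he : 1 ≤ e) :
    ∃ c : ℕ, 0 < c ∧
      cyclotomic (d₀ * p ^ e) (ZMod p) = cyclotomic d₀ (ZMod p) ^ c := by
  haveI : Fact p.Prime := ⟨hp⟩
  induction e with
  | zero => omega
  | succ e ih =>
    rcases Nat.eq_zero_or_pos e with he0 | hepos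
    · subst he0
      refine ⟨p - 1, by have := hp.two_le; omega, ?_⟩
      have hexp := Polynomial.cyclotomic_expand_eq_cyclotomic_mul hp hd₀ (ZMod p)
      have hfrob := Polynomial.map_frobenius_expand (p := p) (cyclotomic d₀ (ZMod p))
      rw [hexp] at hfrob
      rw [Polynomial.map_mul, map_cyclotomic, map_cyclotomic] at hfrob
      have hc : cyclotomic d₀ (ZMod p) ≠ 0 := cyclotomic_ne_zero _ _
      have : cyclotomic (d₀ * p) (ZMod p) * cyclotomic d₀ (ZMod p)
          = cyclotomic d₀ (ZMod p) ^ (p - 1) * cyclotomic d₀ (ZMod p) := by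
        rw [← pow_succ, Nat.sub_add_cancel hp.one_lt.le, hfrob]
      have := mul_right_cancel₀ hc this
      simpa [pow_one] using this
    · obtain ⟨c, hc, hcyc⟩ := ih hepos
      refine ⟨c * p, Nat.mul_pos hc hp.pos, ?_⟩
      have hdvd : p ∣ d₀ * p ^ e := Dvd.dvd.mul_left (dvd_pow_self p hepos.ne') d₀
      have hexp := Polynomial.cyclotomic_expand_eq_cyclotomic hp hdvd (ZMod p)
      have hfrob := Polynomial.map_frobenius_expand (p := p) (cyclotomic (d₀ * p ^ e) (ZMod p))
      rw [hexp] at hfrob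
      rw [map_cyclotomic] at hfrob
      have : d₀ * p ^ e * p = d₀ * p ^ (e + 1) := by ring
      rw [this] at hfrob
      rw [hfrob, hcyc, ← pow_mul]

/-- Integral version. -/
lemma cyclotomic_mul_prime_pow_int {p d₀ : ℕ} (hp : p.Prime) (hd₀ : ¬ p ∣ d₀)
    (hd₀pos : 0 < d₀) {e : ℕ} (he : 1 ≤ e) :
    ∃ c : ℕ, 0 < c ∧ ∃ h : ℤ[X],
      cyclotomic d₀ ℤ ^ c = cyclotomic (d₀ * p ^ e) ℤ + (p : ℤ[X]) * h := by
  obtain ⟨c, hc, hcyc⟩ := cyclotomic_mul_prime_pow_zmod hp hd₀ hd₀pos he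
  refine ⟨c, hc, ?_⟩
  have hdvd : Polynomial.C (p : ℤ) ∣ cyclotomic d₀ ℤ ^ c - cyclotomic (d₀ * p ^ e) ℤ := by
    rw [Polynomial.C_dvd_iff_dvd_coeff]
    intro t
    have hmap : (cyclotomic d₀ ℤ ^ c - cyclotomic (d₀ * p ^ e) ℤ).map
        (Int.castRingHom (ZMod p)) = 0 := by
      rw [Polynomial.map_sub, Polynomial.map_pow, map_cyclotomic, map_cyclotomic, hcyc, sub_self]
    have := congrArg (fun q => Polynomial.coeff q t) hmap
    simp only [Polynomial.coeff_map, Polynomial.coeff_zero] at this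
    exact_mod_cast (ZMod.intCast_zmod_eq_zero_iff_dvd _ p).mp this
  obtain ⟨h, hh⟩ := hdvd
  refine ⟨h, ?_⟩
  rw [← Polynomial.C_eq_natCast]
  linear_combination hh

/-- binomial splitting. -/
lemma add_pow_split {R : Type*} [CommRing R] (a b : R) (j : ℕ) :
    ∃ K : R, (a + b) ^ j = a ^ j + b * K := by
  induction j with
  | zero => exact ⟨0, by simp⟩
  | succ j ih =>
    obtain ⟨K, hK⟩ := ih
    exact ⟨a ^ j + (a + b) * K, by rw [pow_succ, hK]; ring⟩

/-- In a domain: a prime power and a coprime element both dividing give product dividing. -/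
lemma prime_pow_mul_dvd {R : Type*} [CommRing R] [IsDomain R] {P y : R} (hP : Prime P)
    (hPy : ¬ P ∣ y) : ∀ (a : ℕ) (z : R), P ^ a ∣ z → y ∣ z → P ^ a * y ∣ z := by
  intro a
  induction a with
  | zero => intro z _ hy; simpa using hy
  | succ a ih =>
    intro z hPz hyz
    obtain ⟨w, hw⟩ := hPz
    obtain ⟨v, hv⟩ := hyz
    have hPz' : P ∣ z := ⟨P ^ a * w, by rw [hw]; ring⟩
    have hPv : P ∣ y * v := hv ▸ hPz'
    rcases hP.dvd_mul.mp hPv with hPy' | hPv'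
    · exact absurd hPy' hPy
    obtain ⟨v', hv'⟩ := hPv'
    have hz' : P ^ a * w = y * v' := by
      apply mul_left_cancel₀ hP.ne_zero
      have : P * (P ^ a * w) = z := by rw [hw]; ring
      rw [this, hv, hv']
      ring
    have : P ^ a * y ∣ P ^ a * w := ih (P ^ a * w) ⟨w, rfl⟩ ⟨v', hz'⟩
    obtain ⟨u, hu⟩ := this
    exact ⟨u, by rw [hw]; rw [pow_succ] at *; linear_combination P * hu⟩
/-- index sets of cyclotomic factors of `1 + (-X)^i`. -/
def cycSet (i : ℕ) : Finset ℕ := if 2 ∣ i then (2 * i).divisors \ i.divisors else i.divisors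

lemma mem_cycSet_pos {d i : ℕ} (h : d ∈ cycSet i) : 0 < d := by
  rw [cycSet] at h
  split_ifs at h with h2
  · exact Nat.pos_of_mem_divisors (Finset.mem_sdiff.mp h).1
  · exact Nat.pos_of_mem_divisors h

/-- the factorization of `1 + (-X)^i` into cyclotomic polynomials, up to sign. -/
lemma factor_eq (i : ℕ) (hi : 0 < i) :
    (1 + (-X) ^ i : ℤ[X]) =
      (if 2 ∣ i then 1 else -1) * ∏ d ∈ cycSet i, cyclotomic d ℤ := by
  rw [cycSet]
  split_ifs with h2
  · -- i even : 1 + X^i = ∏_{d ∈ divisors 2i \ divisors i} Φ_d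
    obtain ⟨u, hu⟩ := h2
    have heven : Even i := ⟨u, by omega⟩
    have hXi : ((-X : ℤ[X])) ^ i = X ^ i := heven.neg_pow X
    have hsub : i.divisors ⊆ (2 * i).divisors :=
      Nat.divisors_subset_of_dvd (by positivity) (dvd_mul_left i 2)
    have hprod := Finset.prod_sdiff (f := fun d => cyclotomic d ℤ) hsub
    have hA : ∏ d ∈ (2 * i).divisors, cyclotomic d ℤ = X ^ (2 * i) - 1 :=
      prod_cyclotomic_eq_X_pow_sub_one (by positivity) ℤ
    have hB : ∏ d ∈ i.divisors, cyclotomic d ℤ = X ^ i - 1 :=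
      prod_cyclotomic_eq_X_pow_sub_one hi ℤ
    rw [hA, hB] at hprod
    have h2i : (X : ℤ[X]) ^ (2 * i) - 1 = (X ^ i + 1) * (X ^ i - 1) := by
      rw [two_mul, pow_add]; ring
    rw [h2i] at hprod
    have hne : ((X : ℤ[X]) ^ i - 1) ≠ 0 := by
      intro hcon
      have := congrArg (fun q => Polynomial.coeff q i) hcon
      simp [Polynomial.coeff_one, hi.ne'] at this
    have := mul_right_cancel₀ hne hprod
    rw [hXi, one_mul, this, add_comm]
  · -- i odd : 1 - X^i = -(X^i - 1)
    have hodd : Odd i := Nat.odd_iff.mpr (by omega)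
    have hXi : ((-X : ℤ[X])) ^ i = -X ^ i := hodd.neg_pow X
    rw [hXi, prod_cyclotomic_eq_X_pow_sub_one hi ℤ]
    ring

lemma cyclotomic_dvd_factor {d i : ℕ} (hi : 0 < i) (h : d ∈ cycSet i) :
    cyclotomic d ℤ ∣ (1 + (-X) ^ i : ℤ[X]) := by
  rw [factor_eq i hi]
  exact (Finset.dvd_prod_of_mem _ h).mul_left _

/-- every index in `cycSet i` is odd or divisible by 4. -/
lemma mem_cycSet_odd_or_four_dvd {d i : ℕ} (hi : 0 < i) (h : d ∈ cycSet i) :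
    ¬ 2 ∣ d ∨ 4 ∣ d := by
  rw [cycSet] at h
  split_ifs at h with h2
  · right
    rw [Finset.mem_sdiff, Nat.mem_divisors, Nat.mem_divisors] at h
    obtain ⟨⟨hd2i, _⟩, hdnd⟩ := h
    have hdi : ¬ d ∣ i := fun hc => hdnd ⟨hc, hi.ne'⟩
    have hd2 : 2 ∣ d := by
      by_contra hd2
      have hcop : Nat.Coprime d 2 :=
        ((Nat.Prime.coprime_iff_not_dvd Nat.prime_two).mpr hd2).symm
      exact hdi (hcop.dvd_of_dvd_mul_right (by rwa [mul_comm] at hd2i))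
    obtain ⟨u, hu⟩ := hd2
    rcases Nat.even_or_odd u with hue | huo
    · obtain ⟨w, hw⟩ := hue
      exact ⟨w, by omega⟩
    · exfalso
      have hui : u ∣ i := by
        have h1 : 2 * u ∣ 2 * i := by rw [← hu]; exact hd2i
        exact (Nat.mul_dvd_mul_iff_left (by norm_num : 0 < 2)).mp h1
      obtain ⟨w, hw⟩ := h2
      have huw : u ∣ w := by
        have h1 : u ∣ w * 2 := by rw [mul_comm, ← hw]; exact hui
        have hcop : Nat.Coprime u 2 :=
          ((Nat.Prime.coprime_iff_not_dvd Nat.prime_two).mpr (by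
            rw [Nat.odd_iff] at huo; omega)).symm
        exact hcop.dvd_of_dvd_mul_right h1
      exact hdi (by rw [hu, hw]; exact mul_dvd_mul_left 2 huw)
  · left
    rw [Nat.mem_divisors] at h
    obtain ⟨k, hk⟩ := h.1
    intro hd2
    exact h2 (hk ▸ Dvd.dvd.mul_right hd2 k)
/-- regrouping a double product over index sets into prime powers. -/
lemma regroup {I : Finset ℕ} {sF : ℕ → Finset ℕ} {M : Type*} [CommMonoid M] (f : ℕ → M) :
    ∏ i ∈ I, ∏ d ∈ sF i, f d
      = ∏ d ∈ I.biUnion sF, f d ^ ((I.filter (fun i => d ∈ sF i)).card) := by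
  have step1 : ∀ i ∈ I, ∏ d ∈ sF i, f d
      = ∏ d ∈ I.biUnion sF, (if d ∈ sF i then f d else 1) := by
    intro i hi
    rw [← Finset.prod_filter]
    congr 1
    ext d
    simp only [Finset.mem_filter, Finset.mem_biUnion]
    exact ⟨fun h => ⟨⟨i, hi, h⟩, h⟩, fun h => h.2⟩
  rw [Finset.prod_congr rfl step1, Finset.prod_comm]
  refine Finset.prod_congr rfl fun d _ => ?_
  rw [← Finset.prod_filter, Finset.prod_const]

/-- recombination: pairwise distinct cyclotomic prime powers all dividing `z` give
their product dividing `z`. -/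
lemma prod_cyclotomic_pow_dvd {D : Finset ℕ} (hD : ∀ d ∈ D, 0 < d) {μ : ℕ → ℕ} {z : ℤ[X]}
    (h : ∀ d ∈ D, cyclotomic d ℤ ^ μ d ∣ z) :
    (∏ d ∈ D, cyclotomic d ℤ ^ μ d) ∣ z := by
  classical
  induction D using Finset.induction_on with
  | empty => simpa using dvd_refl z
  | @insert a D' ha ih =>
    rw [Finset.prod_insert ha]
    have hprime : Prime (cyclotomic a ℤ) :=
      (UniqueFactorizationMonoid.irreducible_iff_prime).mp
        (cyclotomic.irreducible (hD a (Finset.mem_insert_self a D')))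
    have hnd : ¬ cyclotomic a ℤ ∣ ∏ d ∈ D', cyclotomic d ℤ ^ μ d := by
      intro hc
      obtain ⟨d, hd, hdvd⟩ := (Prime.dvd_finset_prod_iff hprime _).mp hc
      have h1 : cyclotomic a ℤ ∣ cyclotomic d ℤ := hprime.dvd_of_dvd_pow hdvd
      have hdpos : 0 < d := hD d (Finset.mem_insert_of_mem hd)
      have h2 : Associated (cyclotomic a ℤ) (cyclotomic d ℤ) :=
        (hprime.irreducible).associated_of_dvd (cyclotomic.irreducible hdpos) h1
      have h3 : cyclotomic a ℤ = cyclotomic d ℤ :=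
        eq_of_monic_of_associated (cyclotomic.monic a ℤ) (cyclotomic.monic d ℤ) h2
      have : a = d := cyclotomic_injective h3
      exact ha (this ▸ hd)
    exact prime_pow_mul_dvd hprime hnd (μ a) z (h a (Finset.mem_insert_self a D'))
      (ih (fun d hd => hD d (Finset.mem_insert_of_mem hd))
          (fun d hd => h d (Finset.mem_insert_of_mem hd)))

/-- decomposition of an admissible index `d > 1` as `d₀ * p ^ e`. -/
lemma decompose {d : ℕ} (hd : 1 < d) (hok : ¬ 2 ∣ d ∨ 4 ∣ d) :
    ∃ d₀ p e : ℕ, p.Prime ∧ 1 ≤ e ∧ ¬ p ∣ d₀ ∧ d = d₀ * p ^ e ∧ d₀ < d ∧ 0 < d₀ ∧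
      (¬ 2 ∣ d₀ ∨ 4 ∣ d₀) := by
  have hd0 : d ≠ 0 := by omega
  set o := ordCompl[2] d with ho
  rcases eq_or_ne o 1 with ho1 | ho1
  · -- d is a power of 2
    refine ⟨1, 2, d.factorization 2, Nat.prime_two, ?_, by norm_num, ?_, ?_, by norm_num, ?_⟩
    · -- e ≥ 1 : d even, since d>1 and o=1
      have h2d : 2 ∣ d := by
        by_contra h2d
        have : d.factorization 2 = 0 := Nat.factorization_eq_zero_of_not_dvd h2d
        rw [ho, this] at ho1
        simp at ho1
        omega
      exact (Nat.Prime.factorization_pos_of_dvd Nat.prime_two hd0 h2d)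
    · have := Nat.ordProj_mul_ordCompl_eq_self d 2
      rw [← ho, ho1, mul_one] at this
      omega
    · omega
    · left; norm_num
  · -- take the smallest prime factor of the odd part
    have hopos : 0 < o := Nat.ordCompl_pos 2 hd0
    have ho2 : ¬ 2 ∣ o := Nat.not_dvd_ordCompl Nat.prime_two hd0
    set p := o.minFac with hp
    have hpp : p.Prime := Nat.minFac_prime ho1
    have hpo : p ∣ o := Nat.minFac_dvd o
    have hpd : p ∣ d := hpo.trans (Nat.ordCompl_dvd d 2)
    have hp2 : p ≠ 2 := by
      intro h2
      exact ho2 (h2 ▸ hpo)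
    set e := d.factorization p with he
    refine ⟨ordCompl[p] d, p, e, hpp, Nat.Prime.factorization_pos_of_dvd hpp hd0 hpd,
      Nat.not_dvd_ordCompl hpp hd0, ?_, ?_, Nat.ordCompl_pos p hd0, ?_⟩
    · rw [mul_comm]
      exact (Nat.ordProj_mul_ordCompl_eq_self d p).symm
    · -- d₀ < d
      have h1 : 1 < p ^ e := by
        have : 1 ≤ e := Nat.Prime.factorization_pos_of_dvd hpp hd0 hpd
        calc 1 < p := hpp.one_lt
        _ ≤ p ^ e := Nat.le_self_pow (by omega) p
      have hcompl : ordCompl[p] d ∣ d := Nat.ordCompl_dvd d p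
      have hpos : 0 < ordCompl[p] d := Nat.ordCompl_pos p hd0
      have := Nat.ordProj_mul_ordCompl_eq_self d p
      nlinarith [this, h1, hpos]
    · -- parity of d₀
      rcases hok with hodd | h4
      · left
        intro h2
        exact hodd (h2.trans (Nat.ordCompl_dvd d p))
      · right
        -- p is odd, so the 2-part of d₀ equals that of d
        have hpodd : ¬ 2 ∣ p ^ e := by
          intro hc
          have := (Nat.prime_two.dvd_of_dvd_pow hc)
          exact hp2 ((Nat.prime_dvd_prime_iff_eq Nat.prime_two hpp).mp this).symm
        have hcop : Nat.Coprime 4 (p ^ e) := by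
          have hcop2 : Nat.Coprime 2 (p ^ e) :=
            (Nat.Prime.coprime_iff_not_dvd Nat.prime_two).mpr hpodd
          have : Nat.Coprime (2 * 2) (p ^ e) := Nat.Coprime.mul hcop2 hcop2
          simpa using this
        have hdeq : d = ordCompl[p] d * p ^ e := by
          rw [mul_comm]
          exact (Nat.ordProj_mul_ordCompl_eq_self d p).symm
        exact hcop.dvd_of_dvd_mul_right (by rw [← hdeq]; exact h4)
/-- membership of `d` in the factor index set of `1 + (-X)^(c(2t+3))`. -/
lemma mem_cycSet_of_ok {d : ℕ} (hdpos : 0 < d) (hok : ¬ 2 ∣ d ∨ 4 ∣ d) (t : ℕ) :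
    d ∈ cycSet ((if 2 ∣ d then d / 2 else d) * (2 * t + 3)) := by
  rcases hok with hodd | h4
  · rw [if_neg hodd, cycSet]
    have hnot2 : ¬ 2 ∣ d * (2 * t + 3) := by
      intro hc
      rcases (Nat.prime_two.dvd_mul).mp hc with h | h
      · exact hodd h
      · omega
    rw [if_neg hnot2, Nat.mem_divisors]
    exact ⟨Dvd.intro _ rfl, by positivity⟩
  · obtain ⟨c, hc⟩ := h4
    have h2d : 2 ∣ d := ⟨2 * c, by omega⟩
    rw [if_pos h2d]
    have hd2 : d / 2 = 2 * c := by omega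
    rw [cycSet, if_pos (by rw [hd2]; exact ⟨c * (2 * t + 3), by ring⟩)]
    rw [Finset.mem_sdiff, Nat.mem_divisors, Nat.mem_divisors]
    have hcpos : 0 < c := by omega
    refine ⟨⟨⟨2 * t + 3, by rw [hd2, hc]; ring⟩, by rw [hd2]; positivity⟩, ?_⟩
    rintro ⟨⟨k, hk⟩, -⟩
    rw [hd2, hc] at hk
    -- 2c(2t+3) = 4c k  →  2t+3 = 2k, contradiction
    have : 2 * t + 3 = 2 * k := by
      have h1 : 2 * c * (2 * t + 3) = 2 * c * (2 * k) := by rw [hk]; ring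
      exact Nat.eq_of_mul_eq_mul_left (by omega) h1
    omega

/-- the number of factors of `qPoly m` containing `Φ_d` is unbounded in `m`. -/
lemma count_unbounded {d : ℕ} (hdpos : 0 < d) (hok : ¬ 2 ∣ d ∨ 4 ∣ d) (j : ℕ) :
    ∃ M : ℕ, ∀ m, M ≤ m →
      j ≤ ((Finset.range (2 * m)).filter (fun i => d ∈ cycSet (i + 2))).card := by
  set c := if 2 ∣ d then d / 2 else d with hcdef
  have hcpos : 0 < c := by
    rw [hcdef]; split_ifs with h
    · rcases hok with h' | h'
      · exact absurd h h'
      · omega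
    · exact hdpos
  set idx : ℕ → ℕ := fun t => c * (2 * t + 3) - 2 with hidx
  have hidxval : ∀ t, idx t + 2 = c * (2 * t + 3) := by
    intro t
    have : 2 ≤ c * (2 * t + 3) := by nlinarith
    simp only [hidx]
    omega
  refine ⟨c * (2 * j + 3), fun m hm => ?_⟩
  have hsub : (Finset.range j).image idx ⊆
      (Finset.range (2 * m)).filter (fun i => d ∈ cycSet (i + 2)) := by
    intro x hx
    rw [Finset.mem_image] at hx
    obtain ⟨t, ht, rfl⟩ := hx
    rw [Finset.mem_range] at ht
    rw [Finset.mem_filter, Finset.mem_range]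
    constructor
    · have h1 : c * (2 * t + 3) ≤ c * (2 * j + 1) := by
        apply Nat.mul_le_mul_left
        omega
      have h2 : c * (2 * j + 1) < c * (2 * j + 3) := by nlinarith
      have h3 := hidxval t
      omega
    · rw [hidxval t]
      exact mem_cycSet_of_ok hdpos hok t
  have hinj : Set.InjOn idx (Finset.range j) := by
    intro a _ b _ hab
    have h1 : idx a + 2 = idx b + 2 := by omega
    rw [hidxval, hidxval] at h1
    have := Nat.eq_of_mul_eq_mul_left hcpos h1
    omega
  calc j = ((Finset.range j).image idx).card := by
        rw [Finset.card_image_of_injOn hinj, Finset.card_range]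
    _ ≤ _ := Finset.card_le_card hsub


lemma isCoprime_X_cyclotomic {d : ℕ} (hd : 0 < d) : IsCoprime (X : ℤ[X]) (cyclotomic d ℤ) := by
  apply isCoprime_X_of
  rcases eq_or_lt_of_le (Nat.one_le_iff_ne_zero.mpr hd.ne') with h1 | h1
  · right
    rw [← h1, cyclotomic_one]
    simp
  · left
    exact cyclotomic_coeff_zero ℤ h1

/-- the polynomial version of `P2`. -/
noncomputable def qPoly (n : ℕ) : ℤ[X] := ∏ i ∈ Finset.range (2 * n), (1 + (-X) ^ (i + 2))

lemma toLaurent_qPoly (n : ℕ) : Polynomial.toLaurent (qPoly n) = P2 n := by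
  rw [qPoly, P2, map_prod]
  refine Finset.prod_congr rfl fun i _ => ?_
  rw [map_add, map_one, map_pow, map_neg, Polynomial.toLaurent_X]

lemma qPoly_dvd_qPoly {n m : ℕ} (h : n ≤ m) : qPoly n ∣ qPoly m := by
  rw [qPoly, qPoly]
  apply Finset.prod_dvd_prod_of_subset
  exact Finset.range_subset_range.mpr (by omega)

lemma cyclotomic_pow_dvd_qPoly {d j m : ℕ} (hd : 0 < d)
    (hj : j ≤ ((Finset.range (2 * m)).filter (fun i => d ∈ cycSet (i + 2))).card) :
    cyclotomic d ℤ ^ j ∣ qPoly m := by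
  set Fl := (Finset.range (2 * m)).filter (fun i => d ∈ cycSet (i + 2)) with hFl
  have h1 : cyclotomic d ℤ ^ j ∣ cyclotomic d ℤ ^ Fl.card := pow_dvd_pow _ hj
  have h2 : cyclotomic d ℤ ^ Fl.card ∣ ∏ i ∈ Fl, (1 + (-X) ^ (i + 2) : ℤ[X]) := by
    rw [← Finset.prod_const]
    apply Finset.prod_dvd_prod_of_dvd
    intro i hi
    have hmem : d ∈ cycSet (i + 2) := (Finset.mem_filter.mp hi).2
    exact cyclotomic_dvd_factor (by omega) hmem
  have h3 : (∏ i ∈ Fl, (1 + (-X) ^ (i + 2) : ℤ[X])) ∣ qPoly m := by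
    rw [qPoly]
    exact Finset.prod_dvd_prod_of_subset _ _ _ (Finset.filter_subset _ _)
  exact h1.trans (h2.trans h3)

lemma qPoly_factor (n : ℕ) :
    ∃ E : ℤ[X], IsUnit E ∧ qPoly n =
      E * ∏ d ∈ (Finset.range (2 * n)).biUnion (fun i => cycSet (i + 2)),
        cyclotomic d ℤ ^ (((Finset.range (2 * n)).filter (fun i => d ∈ cycSet (i + 2))).card) := by
  refine ⟨∏ i ∈ Finset.range (2 * n), (if 2 ∣ (i + 2) then 1 else (-1 : ℤ[X])), ?_, ?_⟩
  · apply isUnit_of_dvd_one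
    have h := Finset.prod_dvd_prod_of_dvd (s := Finset.range (2 * n))
      (fun i => (if 2 ∣ (i + 2) then 1 else (-1 : ℤ[X]))) (fun _ => (1 : ℤ[X]))
      (fun a _ => by split_ifs <;> simp)
    simpa using h
  · rw [qPoly, Finset.prod_congr rfl (fun i (hi : i ∈ Finset.range (2 * n)) =>
      factor_eq (i + 2) (by omega)), Finset.prod_mul_distrib,
      regroup (I := Finset.range (2 * n)) (sF := fun i => cycSet (i + 2))
        (fun d => cyclotomic d ℤ)]

end HabiroAux

/-- Injectivity of the Taylor map `T : Ẑ[v]₂ → ℤ[[v-1]]`, where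
`Ẑ[v]₂ = lim← ℤ[v^{±1}]/((-v²;-v)_{2n})`.  An element of the inverse limit is
represented by a sequence `g : ℕ → ℤ[v^{±1}]` with `g (n+1) ≡ g n mod (-v²;-v)_{2n}`;
its Taylor series vanishes iff `taylorLP (g n) ≡ 0 mod X^(n+1)` for all `n` (note
`X^(n+1) ∣ taylorLP (P2 n)`), and the element is `0` iff `(-v²;-v)_{2n} ∣ g n` for
all `n`.  So injectivity reads: -/
theorem taylor_injective_on_habiro_like_ring (g : ℕ → LaurentPolynomial ℤ)
    (hcompat : ∀ n, P2 n ∣ (g (n + 1) - g n))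
    (hTaylor : ∀ n, (PowerSeries.X : PowerSeries ℤ) ^ (n + 1) ∣ taylorLP (g n)) :
    ∀ n, P2 n ∣ g n := by
  classical
  open Polynomial HabiroAux in
  -- a sits in all P2 t for t ≥ M ⟹ a divides differences of the sequence
  have hdiff : ∀ (a : LaurentPolynomial ℤ) (M : ℕ), (∀ t, M ≤ t → a ∣ P2 t) →
      ∀ m m', M ≤ m → m ≤ m' → a ∣ g m' - g m := by
    intro a M hP2 m m' hMm hmm'
    induction m', hmm' using Nat.le_induction with
    | base => simpa using dvd_zero a
    | succ m' hm' ih =>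
      have h1 : a ∣ g (m' + 1) - g m' := (hP2 m' (le_trans hMm hm')).trans (hcompat m')
      have he : g (m' + 1) - g m = (g (m' + 1) - g m') + (g m' - g m) := by ring
      rw [he]
      exact dvd_add h1 ih
  have hP2dvd : ∀ d : ℕ, 0 < d → (¬ 2 ∣ d ∨ 4 ∣ d) → ∀ j : ℕ, ∃ M, ∀ t, M ≤ t →
      Polynomial.toLaurent (cyclotomic d ℤ ^ j) ∣ P2 t := by
    intro d hdpos hok j
    obtain ⟨M, hM⟩ := count_unbounded hdpos hok j
    refine ⟨M, fun t ht => ?_⟩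
    rw [← toLaurent_qPoly]
    exact map_dvd _ (cyclotomic_pow_dvd_qPoly hdpos (hM t ht))
  -- main propagation along the divisibility chain
  have main : ∀ d : ℕ, 0 < d → (¬ 2 ∣ d ∨ 4 ∣ d) → ∀ j : ℕ, ∃ M, ∀ m, M ≤ m →
      Polynomial.toLaurent (cyclotomic d ℤ ^ j) ∣ g m := by
    intro d
    induction d using Nat.strong_induction_on with
    | _ d ih =>
      intro hdpos hok j
      rcases eq_or_lt_of_le (Nat.one_le_iff_ne_zero.mpr hdpos.ne') with hd1 | hd1
      · -- base case d = 1 : cyclotomic 1 = X - 1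
        refine ⟨j, fun m hm => ?_⟩
        have hA := pow_sub_one_dvd_of_X_pow_dvd_taylor (hTaylor m)
        rw [← hd1, cyclotomic_one]
        exact dvd_trans (map_dvd _ (pow_dvd_pow _ (by omega : j ≤ m + 1))) hA
      · obtain ⟨d₀, p, e, hpp, he, hpd₀, hdeq, hd₀lt, hd₀pos, hok₀⟩ := decompose hd1 hok
        obtain ⟨c, hcpos, h, hmodp⟩ := by
          have := cyclotomic_mul_prime_pow_int hpp hpd₀ hd₀pos he
          rwa [← hdeq] at this
        -- hmodp : cyclotomic d₀ ℤ ^ c = cyclotomic d ℤ + p * h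
        obtain ⟨M₀, hM₀⟩ := hP2dvd d hdpos hok j
        refine ⟨M₀, fun m hm => ?_⟩
        have hmonic : (cyclotomic d ℤ ^ j).Monic := (cyclotomic.monic d ℤ).pow j
        have hcop : IsCoprime (X : ℤ[X]) (cyclotomic d ℤ ^ j) :=
          (isCoprime_X_cyclotomic hdpos).pow_right
        apply laurent_dvd_of_forall_padic hmonic hcop hpp
        intro s
        obtain ⟨K₁, hK₁⟩ := add_pow_split (cyclotomic d ℤ) ((p : ℤ[X]) * h) j
        obtain ⟨K₂, hK₂⟩ :=
          add_pow_split ((p : ℤ[X]) * (h * K₁)) (cyclotomic d ℤ ^ j) s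
        obtain ⟨M₁, hM₁⟩ := ih d₀ hd₀lt hd₀pos hok₀ (c * j * s)
        set m₁ := max m M₁ with hm₁
        have h1 : Polynomial.toLaurent (cyclotomic d ℤ ^ j) ∣ g m₁ - g m :=
          hdiff _ M₀ (fun t ht => hM₀ t ht) m m₁ hm (le_max_left _ _)
        have h2 : Polynomial.toLaurent (cyclotomic d₀ ℤ ^ (c * j * s)) ∣ g m₁ :=
          hM₁ m₁ (le_max_right _ _)
        have hsplit : cyclotomic d₀ ℤ ^ (c * j * s)
            = (p : ℤ[X]) ^ s * (h * K₁) ^ s + cyclotomic d ℤ ^ j * K₂ := by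
          have e1 : cyclotomic d₀ ℤ ^ (c * j)
              = cyclotomic d ℤ ^ j + (p : ℤ[X]) * (h * K₁) := by
            rw [pow_mul, hmodp, hK₁]
            ring
          calc cyclotomic d₀ ℤ ^ (c * j * s) = (cyclotomic d₀ ℤ ^ (c * j)) ^ s := by
                rw [← pow_mul]
            _ = ((p : ℤ[X]) * (h * K₁) + cyclotomic d ℤ ^ j) ^ s := by rw [e1]; ring_nf
            _ = ((p : ℤ[X]) * (h * K₁)) ^ s + cyclotomic d ℤ ^ j * K₂ := hK₂
            _ = _ := by rw [mul_pow]
        obtain ⟨y, hy⟩ := h2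
        refine ⟨Polynomial.toLaurent ((h * K₁) ^ s) * y, ?_⟩
        have hgm₁ : g m₁ = (p : LaurentPolynomial ℤ) ^ s
              * (Polynomial.toLaurent ((h * K₁) ^ s) * y)
            + Polynomial.toLaurent (cyclotomic d ℤ ^ j) * (Polynomial.toLaurent K₂ * y) := by
          rw [hy]
          rw [show Polynomial.toLaurent (cyclotomic d₀ ℤ ^ (c * j * s))
            = (p : LaurentPolynomial ℤ) ^ s * Polynomial.toLaurent ((h * K₁) ^ s)
              + Polynomial.toLaurent (cyclotomic d ℤ ^ j) * Polynomial.toLaurent K₂ by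
            rw [← map_natCast Polynomial.toLaurent p, ← map_pow, ← map_mul, ← map_mul, ← map_add,
              hsplit]]
          ring
        have heq : g m - (p : LaurentPolynomial ℤ) ^ s
              * (Polynomial.toLaurent ((h * K₁) ^ s) * y)
            = -(g m₁ - g m)
              + Polynomial.toLaurent (cyclotomic d ℤ ^ j) * (Polynomial.toLaurent K₂ * y) := by
          rw [hgm₁]
          ring
        rw [heq]
        exact dvd_add (h1.neg_right) (dvd_mul_right _ _)
  -- final assembly
  intro n
  set B := (Finset.range (2 * n)).biUnion (fun i => cycSet (i + 2)) with hB
  set μ : ℕ → ℕ :=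
    fun d => ((Finset.range (2 * n)).filter (fun i => d ∈ cycSet (i + 2))).card with hμ
  have hBpos : ∀ d ∈ B, 0 < d := by
    intro d hd
    rw [hB, Finset.mem_biUnion] at hd
    obtain ⟨i, _, hi⟩ := hd
    exact mem_cycSet_pos hi
  have hBok : ∀ d ∈ B, ¬ 2 ∣ d ∨ 4 ∣ d := by
    intro d hd
    rw [hB, Finset.mem_biUnion] at hd
    obtain ⟨i, _, hi⟩ := hd
    exact mem_cycSet_odd_or_four_dvd (by omega) hi
  have hex : ∀ d : ℕ, ∃ M : ℕ, d ∈ B → ∀ m, M ≤ m →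
      Polynomial.toLaurent (cyclotomic d ℤ ^ μ d) ∣ g m := by
    intro d
    by_cases hd : d ∈ B
    · obtain ⟨M, hM⟩ := main d (hBpos d hd) (hBok d hd) (μ d)
      exact ⟨M, fun _ => hM⟩
    · exact ⟨0, fun hc => absurd hc hd⟩
  choose M hM using hex
  set m := max n (B.sup M) with hmdef
  obtain ⟨N, F, hF⟩ := exists_T_pow (g m)
  have hdvdF : ∀ d ∈ B, cyclotomic d ℤ ^ μ d ∣ F := by
    intro d hd
    have h1 : Polynomial.toLaurent (cyclotomic d ℤ ^ μ d) ∣ g m :=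
      hM d hd m (le_trans (Finset.le_sup hd) (le_max_right _ _))
    exact dvd_rep_of_laurent_dvd ((isCoprime_X_cyclotomic (hBpos d hd)).pow_right) hF h1
  have hprod : (∏ d ∈ B, cyclotomic d ℤ ^ μ d) ∣ F :=
    prod_cyclotomic_pow_dvd hBpos hdvdF
  obtain ⟨E, hE, hqE⟩ := qPoly_factor n
  have hq : qPoly n ∣ F := by
    rw [hqE, mul_comm]
    exact (hE.mul_right_dvd).mpr hprod
  have hP2gm : P2 n ∣ g m := by
    rw [← toLaurent_qPoly]
    exact laurent_dvd_of_dvd_rep hF hq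
  have hP2t : ∀ t, n ≤ t → P2 n ∣ P2 t := by
    intro t ht
    rw [← toLaurent_qPoly, ← toLaurent_qPoly]
    exact map_dvd _ (qPoly_dvd_qPoly ht)
  have hdn : P2 n ∣ g m - g n :=
    hdiff (P2 n) n hP2t n m (le_refl n) (le_max_left _ _)
  have : g n = g m - (g m - g n) := by ring
  rw [this]
  exact hP2gm.sub hdn
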